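/- Let s₀ = ⌈(64/Δ̄²)·W(n_j Δ̄²/64)⌉ where W is the Lambert W function, Δ̄ > 0, n_j ≥ 1. Then √((4/s₀)·log₊(n_j/s₀)) ≤ Δ̄/4, where log₊(x) = max(0, log x). -/
import Mathlib


open Real

/-- Calculus fact used in the stopping time bound: with
`s₀ = ⌈(64/Δ̄²)·W(n_j Δ̄²/64)⌉` (Lambert W function `W`), one has
`√((4/s₀)·log₊(n_j/s₀)) ≤ Δ̄/4`. -/
theorem lambertW_ceil_confidence_bound
    (Δbar nj : ℝ) (hΔ : 0 < Δbar) (hnj : 1 ≤ nj)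
    (W : ℝ → ℝ) (hW : ∀ x, 0 ≤ x → 0 ≤ W x ∧ W x * Real.exp (W x) = x)
    (s0 : ℕ) (hs0 : s0 = ⌈64 / Δbar ^ 2 * W (nj * Δbar ^ 2 / 64)⌉₊) :
    Real.sqrt (4 / s0 * max 0 (Real.log (nj / s0))) ≤ Δbar / 4 := by
  set x : ℝ := nj * Δbar ^ 2 / 64 with hx
  have hΔ2 : (0:ℝ) < Δbar ^ 2 := by positivity
  have hxpos : 0 < x := by positivity
  obtain ⟨hWnn, hWeq⟩ := hW x hxpos.le
  set w : ℝ := W x with hwdef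
  have hwpos : 0 < w := by
    rcases lt_or_eq_of_le hWnn with h | h
    · exact h
    · exfalso; rw [← h] at hWeq; simp at hWeq; linarith
  set c : ℝ := 64 / Δbar ^ 2 with hc
  have hcpos : 0 < c := by positivity
  have hcw : c * w ≤ (s0 : ℝ) := by
    rw [hs0]; exact Nat.le_ceil _
  have hs0pos : (0:ℝ) < (s0 : ℝ) := lt_of_lt_of_le (by positivity) hcw
  have hnjpos : (0:ℝ) < nj := lt_of_lt_of_le one_pos hnj
  -- key: nj / (c*w) = exp w
  have hkey : nj / (c * w) = Real.exp w := by
    have : nj / c = w * Real.exp w := by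
      rw [hWeq, hx, hc]; field_simp
    rw [div_mul_eq_div_div, this]; field_simp
  have hfrac : nj / (s0 : ℝ) ≤ Real.exp w := by
    rw [← hkey]
    exact div_le_div_of_nonneg_left hnjpos.le (by positivity) hcw
  have hlog : Real.log (nj / (s0 : ℝ)) ≤ w := by
    calc Real.log (nj / (s0 : ℝ)) ≤ Real.log (Real.exp w) :=
          Real.log_le_log (by positivity) hfrac
      _ = w := Real.log_exp w
  have hmax : max 0 (Real.log (nj / (s0 : ℝ))) ≤ w := max_le hwpos.le hlog
  have hmain : 4 / (s0 : ℝ) * max 0 (Real.log (nj / (s0 : ℝ))) ≤ (Δbar / 4) ^ 2 := by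
    have h1 : 4 / (s0 : ℝ) * max 0 (Real.log (nj / (s0 : ℝ))) ≤ 4 / (s0 : ℝ) * w :=
      mul_le_mul_of_nonneg_left hmax (by positivity)
    have h2 : 4 / (s0 : ℝ) * w ≤ 4 / (c * w) * w := by
      apply mul_le_mul_of_nonneg_right _ hwpos.le
      exact div_le_div_of_nonneg_left (by norm_num) (by positivity) hcw
    have h3 : 4 / (c * w) * w = (Δbar / 4) ^ 2 := by
      rw [hc]; field_simp; ring
    linarith
  calc Real.sqrt (4 / (s0:ℝ) * max 0 (Real.log (nj / (s0:ℝ))))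
      ≤ Real.sqrt ((Δbar / 4) ^ 2) := Real.sqrt_le_sqrt hmain
    _ = Δbar / 4 := Real.sqrt_sq (by positivity)
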